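/- Let σ : ℝ → ℝ be continuously differentiable with σ'(t) → 1 as t → ∞ and σ'(t) → 0 as t → −∞. For θ, b > 0 define f(x) = (σ(θ(x−b−1)) − σ(θ(x−b)))/θ + 1. Then f can be written as f(x) = (1/θ)∫_{θ(x−b−1)}^{θ(x−b)} (1 − σ'(t)) dt, and for any ε > 0 and R > 1, choosing b = 2R and θ sufficiently large yields: |f(x) − 1| ≤ ε and |f'(x)| ≤ ε for all x ∈ [0, R], and |f(x)| ≤ ε and |f'(x)| ≤ ε for all x ≥ 4R. -/

import Mathlib

open Filter intervalIntegral

/-- The cutoff function `f(x) = (σ(θ(x−b−1)) − σ(θ(x−b)))/θ + 1`. -/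
noncomputable def fcut (σ : ℝ → ℝ) (θ b x : ℝ) : ℝ :=
  (σ (θ * (x - b - 1)) - σ (θ * (x - b))) / θ + 1

lemma ftc (σ : ℝ → ℝ) (hσ : ContDiff ℝ 1 σ) (a c : ℝ) :
    ∫ t in a..c, deriv σ t = σ c - σ a :=
  intervalIntegral.integral_deriv_eq_sub
    (fun t _ => (hσ.differentiable one_ne_zero t))
    ((hσ.continuous_deriv le_rfl).intervalIntegrable a c)

lemma fcut_repr (σ : ℝ → ℝ) (hσ : ContDiff ℝ 1 σ) (θ b x : ℝ) (hθ : 0 < θ) :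
    fcut σ θ b x
      = (1 / θ) * ∫ t in (θ * (x - b - 1))..(θ * (x - b)), (1 - deriv σ t) := by
  have hcont := hσ.continuous_deriv le_rfl
  rw [intervalIntegral.integral_sub (intervalIntegrable_const)
      (hcont.intervalIntegrable _ _), intervalIntegral.integral_const,
      ftc σ hσ]
  unfold fcut
  have : θ ≠ 0 := ne_of_gt hθ
  field_simp
  ring

lemma fcut_deriv (σ : ℝ → ℝ) (hσ : ContDiff ℝ 1 σ) (θ b : ℝ) (hθ : θ ≠ 0) (x : ℝ) :
    deriv (fcut σ θ b) x = deriv σ (θ * (x - b - 1)) - deriv σ (θ * (x - b)) := by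
  have hdiff := hσ.differentiable one_ne_zero
  have h1 : HasDerivAt (fun y : ℝ => θ * (y - b - 1)) θ x := by
    simpa using (((hasDerivAt_id x).sub_const b).sub_const 1).const_mul θ
  have h2 : HasDerivAt (fun y : ℝ => θ * (y - b)) θ x := by
    simpa using ((hasDerivAt_id x).sub_const b).const_mul θ
  have hA : HasDerivAt (fun y => σ (θ * (y - b - 1)))
      (deriv σ (θ * (x - b - 1)) * θ) x :=
    (hdiff _).hasDerivAt.comp x h1
  have hB : HasDerivAt (fun y => σ (θ * (y - b)))
      (deriv σ (θ * (x - b)) * θ) x :=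
    (hdiff _).hasDerivAt.comp x h2
  have H : HasDerivAt (fcut σ θ b)
      ((deriv σ (θ * (x - b - 1)) * θ - deriv σ (θ * (x - b)) * θ) / θ) x :=
    ((hA.sub hB).div_const θ).add_const 1
  rw [H.deriv]
  field_simp

/-- For `σ` `C¹` with `σ'(t) → 1` at `+∞` and `σ'(t) → 0` at `−∞`: the cutoff
function has the integral representation
`f(x) = (1/θ)∫_{θ(x−b−1)}^{θ(x−b)} (1 − σ'(t)) dt`, and for any `ε > 0`,
`R > 1`, taking `b = 2R` and `θ` large enough gives `|f − 1| ≤ ε`, `|f'| ≤ ε`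
on `[0,R]` and `|f| ≤ ε`, `|f'| ≤ ε` for `x ≥ 4R`. -/
theorem stmt19 (σ : ℝ → ℝ) (hσ : ContDiff ℝ 1 σ)
    (hdtop : Tendsto (deriv σ) atTop (nhds 1))
    (hdbot : Tendsto (deriv σ) atBot (nhds 0)) :
    (∀ θ b x : ℝ, 0 < θ →
      fcut σ θ b x
        = (1 / θ) * ∫ t in (θ * (x - b - 1))..(θ * (x - b)), (1 - deriv σ t)) ∧
    (∀ ε > (0 : ℝ), ∀ R > (1 : ℝ), ∃ θ > (0 : ℝ),
      (∀ x ∈ Set.Icc (0 : ℝ) R,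
        |fcut σ θ (2 * R) x - 1| ≤ ε ∧ |deriv (fcut σ θ (2 * R)) x| ≤ ε) ∧
      (∀ x ≥ 4 * R,
        |fcut σ θ (2 * R) x| ≤ ε ∧ |deriv (fcut σ θ (2 * R)) x| ≤ ε)) := by
  constructor
  · intro θ b x hθ; exact fcut_repr σ hσ θ b x hθ
  intro ε hε R hR
  have hε2 : (0 : ℝ) < ε / 2 := by positivity
  have hRpos : (0 : ℝ) < R := lt_trans one_pos hR
  obtain ⟨M₁, hM₁⟩ := (Metric.tendsto_nhds.mp hdtop (ε / 2) hε2).exists_forall_of_atTop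
  obtain ⟨M₂, hM₂⟩ : ∃ M₂, ∀ t ≤ M₂, dist (deriv σ t) 0 < ε / 2 := by
    have := Metric.tendsto_nhds.mp hdbot (ε / 2) hε2
    rw [eventually_atBot] at this; exact this
  set θ : ℝ := max 1 (max M₁ (-M₂) / R) with hθdef
  have hθ1 : (1 : ℝ) ≤ θ := le_max_left _ _
  have hθpos : (0 : ℝ) < θ := lt_of_lt_of_le one_pos hθ1
  have hθR1 : M₁ ≤ θ * R := by
    have : max M₁ (-M₂) / R ≤ θ := le_max_right _ _
    have h2 : max M₁ (-M₂) ≤ θ * R := by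
      rw [div_le_iff₀ hRpos] at this; linarith [this]
    exact le_trans (le_max_left _ _) h2
  have hθR2 : -(θ * R) ≤ M₂ := by
    have : max M₁ (-M₂) / R ≤ θ := le_max_right _ _
    have h2 : max M₁ (-M₂) ≤ θ * R := by
      rw [div_le_iff₀ hRpos] at this; linarith [this]
    have := le_trans (le_max_right _ _) h2
    linarith
  refine ⟨θ, hθpos, ?_, ?_⟩
  · -- x ∈ [0, R]
    rintro x ⟨hx0, hxR⟩
    set a1 := θ * (x - 2 * R - 1) with ha1
    set a2 := θ * (x - 2 * R) with ha2
    have ha1a2 : a2 - a1 = θ := by ring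
    have ha2le : a2 ≤ M₂ := by
      have : x - 2 * R ≤ -R := by linarith
      have h := mul_le_mul_of_nonneg_left this (le_of_lt hθpos)
      calc a2 ≤ θ * (-R) := h
        _ = -(θ * R) := by ring
        _ ≤ M₂ := hθR2
    have ha1le : a1 ≤ a2 := by nlinarith
    have hbound : ∀ t ∈ Set.uIoc a1 a2, ‖deriv σ t‖ ≤ ε / 2 := by
      intro t ht
      rw [Set.uIoc_of_le ha1le] at ht
      have : t ≤ M₂ := le_trans ht.2 ha2le
      have := hM₂ t this
      rw [Real.dist_eq, sub_zero] at this
      exact le_of_lt this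
    constructor
    · have hint : ∫ t in a1..a2, deriv σ t = σ a2 - σ a1 := ftc σ hσ a1 a2
      have hb : ‖∫ t in a1..a2, deriv σ t‖ ≤ ε / 2 * |a2 - a1| :=
        intervalIntegral.norm_integral_le_of_norm_le_const hbound
      rw [hint, ha1a2, abs_of_pos hθpos] at hb
      have : fcut σ θ (2 * R) x - 1 = (σ a1 - σ a2) / θ := by
        unfold fcut; ring
      rw [this, abs_div, abs_of_pos hθpos]
      rw [div_le_iff₀ hθpos]
      have : |σ a1 - σ a2| = ‖σ a2 - σ a1‖ := by
        rw [Real.norm_eq_abs, abs_sub_comm]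
      rw [this]
      nlinarith [hb]
    · rw [fcut_deriv σ hσ θ (2 * R) (ne_of_gt hθpos) x]
      have h1 : |deriv σ a1| ≤ ε / 2 := by
        have : a1 ≤ M₂ := le_trans (by linarith [ha1a2, hθpos] : a1 ≤ a2) ha2le
        have := hM₂ a1 this
        rw [Real.dist_eq, sub_zero] at this; exact le_of_lt this
      have h2 : |deriv σ a2| ≤ ε / 2 := by
        have := hM₂ a2 ha2le
        rw [Real.dist_eq, sub_zero] at this; exact le_of_lt this
      calc |deriv σ a1 - deriv σ a2| ≤ |deriv σ a1| + |deriv σ a2| := abs_sub _ _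
        _ ≤ ε / 2 + ε / 2 := add_le_add h1 h2
        _ = ε := by ring
  · -- x ≥ 4R
    intro x hx
    set a1 := θ * (x - 2 * R - 1) with ha1
    set a2 := θ * (x - 2 * R) with ha2
    have ha1a2 : a2 - a1 = θ := by ring
    have ha1ge : M₁ ≤ a1 := by
      have h1 : θ * R ≤ a1 := by nlinarith
      linarith
    have ha1le : a1 ≤ a2 := by linarith
    have ha2ge : M₁ ≤ a2 := le_trans ha1ge ha1le
    have hbound : ∀ t ∈ Set.uIoc a1 a2, ‖1 - deriv σ t‖ ≤ ε / 2 := by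
      intro t ht
      rw [Set.uIoc_of_le ha1le] at ht
      have : M₁ ≤ t := le_trans ha1ge (le_of_lt ht.1)
      have := hM₁ t this
      rw [Real.dist_eq] at this
      rw [Real.norm_eq_abs, abs_sub_comm]
      exact le_of_lt this
    constructor
    · rw [fcut_repr σ hσ θ (2 * R) x hθpos]
      have hb : ‖∫ t in a1..a2, (1 - deriv σ t)‖ ≤ ε / 2 * |a2 - a1| :=
        intervalIntegral.norm_integral_le_of_norm_le_const hbound
      rw [ha1a2, abs_of_pos hθpos] at hb
      rw [abs_mul, abs_div, abs_one, abs_of_pos hθpos]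
      rw [Real.norm_eq_abs] at hb
      rw [div_mul_eq_mul_div, one_mul, div_le_iff₀ hθpos]
      nlinarith [hb]
    · rw [fcut_deriv σ hσ θ (2 * R) (ne_of_gt hθpos) x]
      have h1 : |deriv σ a1 - 1| ≤ ε / 2 := by
        have := hM₁ a1 ha1ge; rw [Real.dist_eq] at this; exact le_of_lt this
      have h2 : |deriv σ a2 - 1| ≤ ε / 2 := by
        have := hM₁ a2 ha2ge; rw [Real.dist_eq] at this; exact le_of_lt this
      calc |deriv σ a1 - deriv σ a2|
          = |(deriv σ a1 - 1) - (deriv σ a2 - 1)| := by ring_nf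
        _ ≤ |deriv σ a1 - 1| + |deriv σ a2 - 1| := abs_sub _ _
        _ ≤ ε / 2 + ε / 2 := add_le_add h1 h2
        _ = ε := by ring
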